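/- arXiv:1603.01086 — 4 statements merged into one kernel-verified Lean document; each statement's English description precedes it below -/
import Mathlib

section
/- If a set 𝒞 ⊆ ω^ω admits a Π⁰₁ modulus, then 𝒞 is Π⁰₁ encodable. -/
namespace Paper

/-- Partial recursiveness relative to an oracle `O : ℕ → ℕ`:
the usual inductive definition of `Nat.Partrec` with an extra constructor for the oracle. -/
inductive RecursiveIn (O : ℕ → ℕ) : (ℕ →. ℕ) → Prop
  | zero : RecursiveIn O (pure 0)
  | succ : RecursiveIn O Nat.succ
  | left : RecursiveIn O ↑fun n : ℕ => n.unpair.1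
  | right : RecursiveIn O ↑fun n : ℕ => n.unpair.2
  | oracle : RecursiveIn O ↑O
  | pair {f g} : RecursiveIn O f → RecursiveIn O g →
      RecursiveIn O fun n => Nat.pair <$> f n <*> g n
  | comp {f g} : RecursiveIn O f → RecursiveIn O g →
      RecursiveIn O fun n => g n >>= f
  | prec {f g} : RecursiveIn O f → RecursiveIn O g →
      RecursiveIn O (Nat.unpaired fun a n =>
        n.rec (f a) fun y IH => do let i ← IH; g (Nat.pair a (Nat.pair y i)))
  | rfind {f} : RecursiveIn O f →
      RecursiveIn O fun a => Nat.rfind fun n => (fun m => m = 0) <$> f (Nat.pair a n)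

/-- `f : α →. σ` is partial recursive in the oracle `O`. -/
def PartrecIn (O : ℕ → ℕ) {α σ : Type} [Primcodable α] [Primcodable σ] (f : α →. σ) : Prop :=
  RecursiveIn O fun n =>
    Part.bind (Encodable.decode (α := α) n) fun a => (f a).map Encodable.encode

/-- `f : α → σ` is computable in the oracle `O`. -/
def ComputableIn (O : ℕ → ℕ) {α σ : Type} [Primcodable α] [Primcodable σ] (f : α → σ) : Prop :=
  PartrecIn O (f : α →. σ)

/-- The characteristic function of a set of naturals, used as an oracle. -/
noncomputable def setOracle (X : Set ℕ) : ℕ → ℕ := by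
  classical exact fun n => if n ∈ X then 1 else 0

/-- The initial segment `X↾n` of an element of Baire space, as a finite sequence. -/
def initSeg (X : ℕ → ℕ) (n : ℕ) : List ℕ := List.ofFn fun i : Fin n => X i

/-- `D ⊆ ω^ω` is a `O`-computably bounded `Π⁰₁(O)` class: `D = [T]` for an `O`-computable
tree `T ⊆ ω^{<ω}` whose nodes are bounded by an `O`-computable function. -/
def IsCBPi01In (O : ℕ → ℕ) (D : Set (ℕ → ℕ)) : Prop :=
  ∃ T : List ℕ → Bool,
    ComputableIn O T ∧
    (∀ σ τ : List ℕ, τ <+: σ → T σ = true → T τ = true) ∧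
    (∃ b : ℕ → ℕ, ComputableIn O b ∧
      ∀ σ : List ℕ, T σ = true → ∀ i : Fin σ.length, σ.get i ≤ b i.val) ∧
    D = {X | ∀ n : ℕ, T (initSeg X n) = true}

/-- `C ⊆ ω^ω` is `Π⁰₁` encodable: every infinite `X ⊆ ω` has an infinite subset `Y`
such that `C` admits a non-empty `Y`-computably bounded `Π⁰₁(Y)` subset. -/
def Pi01Encodable (C : Set (ℕ → ℕ)) : Prop :=
  ∀ X : Set ℕ, X.Infinite →
    ∃ Y : Set ℕ, Y ⊆ X ∧ Y.Infinite ∧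
      ∃ D : Set (ℕ → ℕ), D.Nonempty ∧ D ⊆ C ∧ IsCBPi01In (setOracle Y) D

/-- `f` is a `Π⁰₁` modulus of `C`: for every `g ≥ f`, `C` has a non-empty
`g`-computably bounded `Π⁰₁(g)` subset. -/
def IsPi01Modulus (f : ℕ → ℕ) (C : Set (ℕ → ℕ)) : Prop :=
  ∀ g : ℕ → ℕ, (∀ n, f n ≤ g n) →
    ∃ D : Set (ℕ → ℕ), D.Nonempty ∧ D ⊆ C ∧ IsCBPi01In g D

/-- `D ⊆ ω^ω` is `Σ¹₁(O)`. -/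
def IsSigma11In (O : ℕ → ℕ) (D : Set (ℕ → ℕ)) : Prop :=
  ∃ R : List ℕ × List ℕ × ℕ → Bool,
    ComputableIn O R ∧
    D = {X | ∃ Y : ℕ → ℕ, ∀ z : ℕ, R (initSeg X z, initSeg Y z, z) = true}

/-- `D ⊆ ω^ω` is `Σ¹₁`. -/
def IsSigma11 (D : Set (ℕ → ℕ)) : Prop :=
  ∃ R : List ℕ × List ℕ × ℕ → Bool,
    Computable R ∧
    D = {X | ∃ Y : ℕ → ℕ, ∀ z : ℕ, R (initSeg X z, initSeg Y z, z) = true}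

/-- `A ∈ ω^ω` is computably encodable. -/
def ComputablyEncodable (A : ℕ → ℕ) : Prop :=
  ∀ X : Set ℕ, X.Infinite →
    ∃ Y : Set ℕ, Y ⊆ X ∧ Y.Infinite ∧ ComputableIn (setOracle Y) A

/-- `f` is a modulus of `A`: every `g ≥ f` computes `A`. -/
def IsModulus (f : ℕ → ℕ) (A : ℕ → ℕ) : Prop :=
  ∀ g : ℕ → ℕ, (∀ n, f n ≤ g n) → ComputableIn g A

/-- The cylinder `[σ]` of elements of Baire space extending `σ`. -/
def cyl (σ : List ℕ) : Set (ℕ → ℕ) := {X | initSeg X σ.length = σ}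



section Aux

namespace RecursiveIn

theorem of_partrec {O : ℕ → ℕ} {f : ℕ →. ℕ} (h : Nat.Partrec f) : RecursiveIn O f := by
  induction h with
  | zero => exact .zero
  | succ => exact .succ
  | left => exact .left
  | right => exact .right
  | pair _ _ hf hg => exact .pair hf hg
  | comp _ _ hf hg => exact .comp hf hg
  | prec _ _ hf hg => exact .prec hf hg
  | rfind _ hf => exact .rfind hf

theorem trans {O O' : ℕ → ℕ} {f : ℕ →. ℕ} (h : RecursiveIn O f)
    (hO : RecursiveIn O' ↑O) : RecursiveIn O' f := by
  induction h with
  | zero => exact .zero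
  | succ => exact .succ
  | left => exact .left
  | right => exact .right
  | oracle => exact hO
  | pair _ _ hf hg => exact .pair hf hg
  | comp _ _ hf hg => exact .comp hf hg
  | prec _ _ hf hg => exact .prec hf hg
  | rfind _ hf => exact .rfind hf

theorem of_eq {O : ℕ → ℕ} {f g : ℕ →. ℕ} (h : RecursiveIn O f) (he : f = g) :
    RecursiveIn O g := he ▸ h

theorem totalComp {O : ℕ → ℕ} {f : ℕ →. ℕ} {g : ℕ → ℕ} (hf : RecursiveIn O f)
    (hg : RecursiveIn O ↑g) : RecursiveIn O (fun n => f (g n)) := by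
  refine (hf.comp hg).of_eq ?_
  funext n
  simp [PFun.coe_val]
  exact Part.bind_some _ _

theorem totalComp' {O : ℕ → ℕ} {f g : ℕ → ℕ} (hf : RecursiveIn O ↑f)
    (hg : RecursiveIn O ↑g) : RecursiveIn O ↑(fun n => f (g n)) :=
  (totalComp (f := ↑f) hf hg).of_eq (by funext n; simp [PFun.coe_val])

theorem of_primrec {O : ℕ → ℕ} {f : ℕ → ℕ} (h : Primrec f) : RecursiveIn O ↑f :=
  of_partrec (Nat.Partrec.of_primrec (Primrec.nat_iff.mp h))

end RecursiveIn

theorem computableIn_trans {α σ : Type} [Primcodable α] [Primcodable σ]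
    {g O : ℕ → ℕ} {h : α → σ} (hh : ComputableIn g h) (hg : RecursiveIn O ↑g) :
    ComputableIn O h :=
  RecursiveIn.trans hh hg

theorem setOracle_eq_one {X : Set ℕ} {n : ℕ} (h : n ∈ X) : setOracle X n = 1 := by
  unfold setOracle
  simp [h]

theorem setOracle_eq_zero {X : Set ℕ} {n : ℕ} (h : n ∉ X) : setOracle X n = 0 := by
  unfold setOracle
  simp [h]

theorem rfind_eval {q : ℕ → ℕ} {a m : ℕ} (h0 : q (Nat.pair a m) = 0)
    (hlt : ∀ k < m, q (Nat.pair a k) ≠ 0) :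
    (Nat.rfind fun n => (fun m => decide (m = 0)) <$> (↑q : ℕ →. ℕ) (Nat.pair a n))
      = Part.some m := by
  apply Part.eq_some_iff.mpr
  refine Nat.mem_rfind.mpr ?_
  constructor
  · simp [PFun.coe_val, h0]
  · intro k hk
    simp [PFun.coe_val, hlt k hk]

/-- The increasing enumeration of the range of a strictly monotone function is computable
from the oracle for its range. -/
theorem principal_recursiveIn (y : ℕ → ℕ) (hy : StrictMono y) :
    RecursiveIn (setOracle (Set.range y)) ↑y := by
  set O := setOracle (Set.range y) with hO
  have hmem : ∀ m : ℕ, m ∈ Set.range y → 1 - O m = 0 := by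
    intro m hm; rw [hO, setOracle_eq_one hm]
  have hnmem : ∀ m : ℕ, m ∉ Set.range y → 1 - O m ≠ 0 := by
    intro m hm; rw [hO, setOracle_eq_zero hm]; simp
  have h2 : RecursiveIn O ↑(fun m : ℕ => 1 - m) :=
    RecursiveIn.of_primrec (Primrec.nat_sub.comp (Primrec.const 1) Primrec.id)
  have hu2 : RecursiveIn O ↑(fun k : ℕ => k.unpair.2) := .right
  -- the base search: least element of the range
  have hq0 : RecursiveIn O ↑(fun k : ℕ => 1 - O (k.unpair.2)) :=
    RecursiveIn.totalComp' h2 (RecursiveIn.totalComp' .oracle hu2)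
  set base : ℕ →. ℕ := fun a => Nat.rfind fun n =>
      (fun m => decide (m = 0)) <$> (↑(fun k : ℕ => 1 - O (k.unpair.2)) : ℕ →. ℕ) (Nat.pair a n)
    with hbasedef
  have hbase : RecursiveIn O base := .rfind hq0
  -- the step search: least element of the range above a given number
  have hadd1 : RecursiveIn O ↑(fun k : ℕ => k.unpair.1 + k.unpair.2 + 1) := by
    apply RecursiveIn.of_primrec
    exact Primrec.succ.comp (Primrec.nat_add.comp (Primrec.fst.comp Primrec.unpair)
      (Primrec.snd.comp Primrec.unpair))
  have hq1 : RecursiveIn O ↑(fun k : ℕ => 1 - O (k.unpair.1 + k.unpair.2 + 1)) :=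
    RecursiveIn.totalComp' h2 (RecursiveIn.totalComp' .oracle hadd1)
  set S : ℕ →. ℕ := fun i => Nat.rfind fun n =>
      (fun m => decide (m = 0)) <$>
        (↑(fun k : ℕ => 1 - O (k.unpair.1 + k.unpair.2 + 1)) : ℕ →. ℕ) (Nat.pair i n) with hSdef
  have hS : RecursiveIn O S := .rfind hq1
  have hid : RecursiveIn O ↑(fun n : ℕ => n) := RecursiveIn.of_primrec Primrec.id
  set next : ℕ →. ℕ := fun i =>
      (Nat.pair <$> (↑(fun n : ℕ => n) : ℕ →. ℕ) i <*> S i) >>=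
        (↑(fun k : ℕ => k.unpair.1 + k.unpair.2 + 1) : ℕ →. ℕ) with hnextdef
  have hnext : RecursiveIn O next := .comp hadd1 (.pair hid hS)
  have hproj : RecursiveIn O ↑(fun k : ℕ => k.unpair.2.unpair.2) := by
    apply RecursiveIn.of_primrec
    exact (Primrec.snd.comp Primrec.unpair).comp (Primrec.snd.comp Primrec.unpair)
  have hstep : RecursiveIn O (fun k : ℕ => next (k.unpair.2.unpair.2)) :=
    RecursiveIn.totalComp hnext hproj
  have hP : RecursiveIn O (Nat.unpaired fun a n =>
      n.rec (base a) fun z IH => do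
        let i ← IH
        (fun k : ℕ => next (k.unpair.2.unpair.2)) (Nat.pair a (Nat.pair z i))) :=
    .prec hbase hstep
  have hpair0 : RecursiveIn O ↑(fun n : ℕ => Nat.pair 0 n) :=
    RecursiveIn.of_primrec (Primrec₂.comp Primrec₂.natPair (Primrec.const 0) Primrec.id)
  have hG : RecursiveIn O (fun n => (Nat.unpaired fun a n =>
      n.rec (base a) fun z IH => do
        let i ← IH
        (fun k : ℕ => next (k.unpair.2.unpair.2)) (Nat.pair a (Nat.pair z i)))
      (Nat.pair 0 n)) :=
    RecursiveIn.totalComp hP hpair0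
  -- correctness
  have hbase_eval : ∀ a : ℕ, base a = Part.some (y 0) := by
    intro a
    rw [hbasedef]
    apply rfind_eval
    · simp only [Nat.unpair_pair]
      exact hmem _ ⟨0, rfl⟩
    · intro k hk
      simp only [Nat.unpair_pair]
      apply hnmem
      rintro ⟨j, hj⟩
      have := hy.monotone (Nat.zero_le j)
      omega
  have hnext_eval : ∀ n : ℕ, next (y n) = Part.some (y (n + 1)) := by
    intro n
    have hlt : y n < y (n + 1) := hy (Nat.lt_succ_self n)
    have hSe : S (y n) = Part.some (y (n + 1) - y n - 1) := by
      rw [hSdef]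
      apply rfind_eval
      · simp only [Nat.unpair_pair]
        apply hmem
        have : y n + (y (n + 1) - y n - 1) + 1 = y (n + 1) := by omega
        rw [this]
        exact ⟨n + 1, rfl⟩
      · intro k hk
        simp only [Nat.unpair_pair]
        apply hnmem
        rintro ⟨j, hj⟩
        have h1 : y n < y j := by omega
        have h2 : y j < y (n + 1) := by omega
        have := hy.lt_iff_lt.mp h1
        have := hy.lt_iff_lt.mp h2
        omega
    simp only [hnextdef, hSe, Seq.seq, PFun.coe_val, Part.map_eq_map, Part.bind_eq_bind,
      Part.map_some, Part.bind_some, Part.some_inj, Nat.unpair_pair]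
    rw [show ∀ (a : ℕ) (g : ℕ →. ℕ), Part.some a >>= g = g a from fun a g => Part.bind_some a g]
    simp only [PFun.coe_val, Nat.unpair_pair, Part.some_inj]
    omega
  have unf : ∀ a m : ℕ, (Nat.unpaired fun a n =>
      n.rec (base a) fun z IH => do
        let i ← IH
        (fun k : ℕ => next (k.unpair.2.unpair.2)) (Nat.pair a (Nat.pair z i)))
      (Nat.pair a m)
      = Nat.rec (motive := fun _ => Part ℕ) (base a) (fun _ IH => IH >>= fun i => next i) m := by
    intro a m
    simp [Nat.unpaired, Nat.unpair_pair]
  have hW : ∀ m : ℕ, Nat.rec (motive := fun _ => Part ℕ) (base 0)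
      (fun _ IH => IH >>= fun i => next i) m = Part.some (y m) := by
    intro m
    induction m with
    | zero => exact hbase_eval 0
    | succ m ih =>
      show (Nat.rec (motive := fun _ => Part ℕ) (base 0)
        (fun _ IH => IH >>= fun i => next i) m) >>= (fun i => next i) = _
      rw [ih]
      simpa using hnext_eval m
  have hGy : ∀ n : ℕ, (Nat.unpaired fun a n =>
      n.rec (base a) fun z IH => do
        let i ← IH
        (fun k : ℕ => next (k.unpair.2.unpair.2)) (Nat.pair a (Nat.pair z i)))
      (Nat.pair 0 n) = Part.some (y n) := by
    intro n
    rw [unf]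
    exact hW n
  refine hG.of_eq ?_
  funext n
  simp only [hGy n, PFun.coe_val]

end Aux

/-- If `C ⊆ ω^ω` admits a `Π⁰₁` modulus, then `C` is `Π⁰₁` encodable. -/
theorem pi01Encodable_of_pi01Modulus (C : Set (ℕ → ℕ))
    (h : ∃ f : ℕ → ℕ, IsPi01Modulus f C) : Pi01Encodable C := by
  obtain ⟨f, hf⟩ := h
  intro X hX
  have pick : ∀ m : ℕ, ∃ b ∈ X, m < b := hX.exists_gt
  choose p hpX hplt using pick
  set y : ℕ → ℕ := fun n =>
    Nat.rec (p (f 0)) (fun n yn => p (max yn (f (n + 1)))) n with hy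
  have hy0 : y 0 = p (f 0) := rfl
  have hysucc : ∀ n, y (n + 1) = p (max (y n) (f (n + 1))) := fun n => rfl
  have hyX : ∀ n, y n ∈ X := by
    intro n
    cases n with
    | zero => rw [hy0]; exact hpX _
    | succ n => rw [hysucc]; exact hpX _
  have hmono : StrictMono y := by
    apply strictMono_nat_of_lt_succ
    intro n
    rw [hysucc]
    exact lt_of_le_of_lt (le_max_left _ _) (hplt _)
  have hdom : ∀ n, f n ≤ y n := by
    intro n
    cases n with
    | zero => rw [hy0]; exact (hplt _).le
    | succ n =>
      rw [hysucc]
      exact le_trans (le_max_right _ _) (hplt _).le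
  obtain ⟨D, hDne, hDC, T, hT, hTree, ⟨b, hb, hbd⟩, hDeq⟩ := hf y hdom
  have hgy : RecursiveIn (setOracle (Set.range y)) ↑y := principal_recursiveIn y hmono
  refine ⟨Set.range y, ?_, ?_, D, hDne, hDC, T, computableIn_trans hT hgy, hTree,
    ⟨b, computableIn_trans hb hgy, hbd⟩, hDeq⟩
  · rintro _ ⟨n, rfl⟩; exact hyX n
  · exact Set.infinite_range_of_injective hmono.injective

end Paper
end

section
/- If a set 𝒞 ⊆ ω^ω has a non-empty Σ¹₁ subset, then 𝒞 admits a Π⁰₁ modulus. More precisely, if R is a computable predicate such that 𝒟 = {X ∈ ω^ω : (∃Y ∈ ω^ω)(∀z) R(X↾z, Y↾z, z)} is a non-empty subset of 𝒞, and X, Y ∈ ω^ω satisfy (∀z) R(X↾z, Y↾z, z), then the function f defined by f(x) = max(X(x), Y(x)) is a Π⁰₁ modulus of 𝒞. -/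
namespace Paper

/-! ### Auxiliary development -/

theorem RecursiveIn.of_eq' {O : ℕ → ℕ} {f g : ℕ →. ℕ} (h : RecursiveIn O f)
    (H : ∀ n, f n = g n) : RecursiveIn O g := (funext H : f = g) ▸ h

theorem recursiveIn_of_partrec {O : ℕ → ℕ} {f : ℕ →. ℕ} (h : Nat.Partrec f) :
    RecursiveIn O f := by
  induction h with
  | zero => exact .zero
  | succ => exact .succ
  | left => exact .left
  | right => exact .right
  | pair _ _ ih₁ ih₂ => exact .pair ih₁ ih₂
  | comp _ _ ih₁ ih₂ => exact .comp ih₁ ih₂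
  | prec _ _ ih₁ ih₂ => exact .prec ih₁ ih₂
  | rfind _ ih => exact .rfind ih

/-- reversed initial segment of the oracle -/
def revInit (O : ℕ → ℕ) : ℕ → List ℕ
  | 0 => []
  | n + 1 => O n :: revInit O n

theorem recursiveIn_revInit (O : ℕ → ℕ) :
    RecursiveIn O ↑(fun n => Encodable.encode (revInit O n)) := by
  have hg1 : RecursiveIn O ↑(fun m : ℕ => O m.unpair.2.unpair.1) := by
    have h1 : RecursiveIn O ↑(fun m : ℕ => m.unpair.2.unpair.1) :=
      recursiveIn_of_partrec (Nat.Partrec.of_primrec (Nat.Primrec.left.comp Nat.Primrec.right))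
    exact (RecursiveIn.comp RecursiveIn.oracle h1).of_eq' fun n => by
      simp [PFun.coe_val]
      exact Part.bind_some _ _
  have hg2 : RecursiveIn O ↑(fun m : ℕ => m.unpair.2.unpair.2) :=
    recursiveIn_of_partrec (Nat.Partrec.of_primrec (Nat.Primrec.right.comp Nat.Primrec.right))
  have hstep : RecursiveIn O ↑(fun m : ℕ =>
      Nat.pair (O m.unpair.2.unpair.1) m.unpair.2.unpair.2 + 1) := by
    have hp := RecursiveIn.pair hg1 hg2
    have := RecursiveIn.comp RecursiveIn.succ hp
    exact this.of_eq' fun n => by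
      simp [PFun.coe_val, Seq.seq, Nat.succ_eq_add_one]
      exact Part.bind_some _ _
  have hprec := RecursiveIn.prec RecursiveIn.zero hstep
  have hpre : RecursiveIn O ↑(fun n : ℕ => Nat.pair 0 n) :=
    recursiveIn_of_partrec (Nat.Partrec.of_primrec (Nat.Primrec.zero.pair Nat.Primrec.id))
  have := RecursiveIn.comp hprec hpre
  have key : ∀ n : ℕ,
      (Nat.rec (Part.some 0) (fun y IH => IH >>= fun i => Part.some (Nat.pair (O y) i + 1)) n
        : Part ℕ) = Part.some (Encodable.encode (revInit O n)) := by
    intro n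
    induction n with
    | zero => rfl
    | succ n ih =>
        show (Nat.rec (Part.some 0)
            (fun y IH => IH >>= fun i => Part.some (Nat.pair (O y) i + 1)) n : Part ℕ) >>=
            (fun i => Part.some (Nat.pair (O n) i + 1)) = _
        rw [ih]
        simp only [Part.bind_eq_bind, Part.bind_some, revInit, Encodable.encode_list_cons]
        rfl
  refine this.of_eq' fun n => by
    simp only [PFun.coe_val, Part.bind_eq_bind, Part.bind_some, Nat.unpaired, Nat.unpair_pair]
    exact key n

theorem computableIn_self (O : ℕ → ℕ) : ComputableIn O O := by
  unfold ComputableIn PartrecIn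
  refine RecursiveIn.oracle.of_eq' fun n => ?_
  simp [PFun.coe_val]

theorem computableIn_oracleForm {O : ℕ → ℕ} {F : List ℕ → List ℕ → Bool}
    (hF : Computable fun p : List ℕ × List ℕ => F p.1 p.2) :
    ComputableIn O fun σ : List ℕ => F σ (revInit O σ.length) := by
  unfold ComputableIn PartrecIn
  have hrec : RecursiveIn O fun n =>
      Part.bind ((Encodable.decode (α := List ℕ × List ℕ) n : Option (List ℕ × List ℕ)) :
        Part (List ℕ × List ℕ)) fun p =>
        (Part.some (F p.1 p.2)).map Encodable.encode := recursiveIn_of_partrec hF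
  have hlen : RecursiveIn O ↑(fun n : ℕ => (Denumerable.ofNat (List ℕ) n).length) := by
    apply recursiveIn_of_partrec
    have : Primrec (fun n : ℕ => (Denumerable.ofNat (List ℕ) n).length) :=
      Primrec.list_length.comp (Primrec.ofNat (List ℕ))
    exact Nat.Partrec.of_primrec (Primrec.nat_iff.1 this)
  have hmap : RecursiveIn O ↑(fun n : ℕ =>
      Encodable.encode (revInit O (Denumerable.ofNat (List ℕ) n).length)) := by
    have := RecursiveIn.comp (recursiveIn_revInit O) hlen
    exact this.of_eq' fun n => by simp [PFun.coe_val]; exact Part.bind_some _ _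
  have hid : RecursiveIn O ↑(fun n : ℕ => n) :=
    recursiveIn_of_partrec (Nat.Partrec.of_primrec Nat.Primrec.id)
  have hpair : RecursiveIn O ↑(fun n : ℕ =>
      Nat.pair n (Encodable.encode (revInit O (Denumerable.ofNat (List ℕ) n).length))) := by
    have := RecursiveIn.pair hid hmap
    exact this.of_eq' fun n => by simp [PFun.coe_val, Seq.seq]
  have := RecursiveIn.comp hrec hpair
  refine this.of_eq' fun n => ?_
  simp [PFun.coe_val, Part.bind_eq_bind, Part.bind_some]

/-! ### The tree predicate and its computability -/

def takeD (l : List ℕ) (z : ℕ) : List ℕ := (List.range z).map fun i => l.getD i 0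

def chk (R : List ℕ × List ℕ × ℕ → Bool) (p : List ℕ × List ℕ) (z : ℕ) : Bool :=
  R (takeD p.1 z, takeD p.2 z, z)

def diag (R : List ℕ × List ℕ × ℕ → Bool) (p : List ℕ × List ℕ) : Bool :=
  Nat.rec (chk R p 0) (fun z ih => ih && chk R p (z + 1)) p.1.length

def leL (p : List ℕ × List ℕ) : Bool :=
  Nat.rec true (fun i ih => ih && decide (p.1.getD i 0 ≤ p.2.getD i 0)) p.1.length

def good (R : List ℕ × List ℕ × ℕ → Bool) (q : (List ℕ × List ℕ) × ℕ) : Bool :=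
  (decide ((Denumerable.ofNat (List ℕ) q.2).length = q.1.1.length) &&
    leL (Denumerable.ofNat (List ℕ) q.2, q.1.2)) &&
    diag R (q.1.1, Denumerable.ofNat (List ℕ) q.2)

def exWit (R : List ℕ × List ℕ × ℕ → Bool) (p : List ℕ × List ℕ) : Bool :=
  Nat.rec (good R (p, 0)) (fun k ih => ih || good R (p, k + 1)) (Encodable.encode p.2)

def Tcore (R : List ℕ × List ℕ × ℕ → Bool) (σ Lrev : List ℕ) : Bool :=
  leL (σ, Lrev.reverse) && exWit R (σ, Lrev.reverse)

theorem takeD_primrec : Primrec₂ takeD := by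
  have h : Primrec₂ fun (p : List ℕ × ℕ) (i : ℕ) => p.1.getD i 0 :=
    (Primrec.list_getD 0).comp₂ (Primrec.fst.comp₂ Primrec₂.left) Primrec₂.right
  exact (Primrec.list_map (Primrec.list_range.comp Primrec.snd) h).to₂

theorem band_computable : Computable₂ (fun a b : Bool => a && b) := Primrec.and.to_comp
theorem bor_computable : Computable₂ (fun a b : Bool => a || b) := Primrec.or.to_comp

theorem chk_computable {R : List ℕ × List ℕ × ℕ → Bool} (hR : Computable R) :
    Computable fun q : (List ℕ × List ℕ) × ℕ => chk R q.1 q.2 := by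
  have hq11 : Computable fun q : (List ℕ × List ℕ) × ℕ => q.1.1 :=
    Computable.fst.comp Computable.fst
  have hq12 : Computable fun q : (List ℕ × List ℕ) × ℕ => q.1.2 :=
    Computable.snd.comp Computable.fst
  have hq2 : Computable fun q : (List ℕ × List ℕ) × ℕ => q.2 := Computable.snd
  have h1 : Computable fun q : (List ℕ × List ℕ) × ℕ => takeD q.1.1 q.2 :=
    takeD_primrec.to_comp.comp hq11 hq2
  have h2 : Computable fun q : (List ℕ × List ℕ) × ℕ => takeD q.1.2 q.2 :=
    takeD_primrec.to_comp.comp hq12 hq2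
  exact hR.comp (h1.pair (h2.pair hq2))

theorem diag_computable {R : List ℕ × List ℕ × ℕ → Bool} (hR : Computable R) :
    Computable (diag R) := by
  have ha : Computable fun x : (List ℕ × List ℕ) × ℕ × Bool => x.2.2 :=
    Computable.snd.comp Computable.snd
  have hb : Computable fun x : (List ℕ × List ℕ) × ℕ × Bool => (x.1, x.2.1 + 1) :=
    Computable.fst.pair (Computable.succ.comp (Computable.fst.comp Computable.snd))
  have hc : Computable fun x : (List ℕ × List ℕ) × ℕ × Bool =>
      chk R (x.1, x.2.1 + 1).1 (x.1, x.2.1 + 1).2 := (chk_computable hR).comp hb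
  have hc' : Computable fun x : (List ℕ × List ℕ) × ℕ × Bool => chk R x.1 (x.2.1 + 1) :=
    hc.of_eq fun x => rfl
  have hh : Computable fun x : (List ℕ × List ℕ) × ℕ × Bool =>
      x.2.2 && chk R x.1 (x.2.1 + 1) := band_computable.comp ha hc'
  have hg0 : Computable fun p : List ℕ × List ℕ => chk R (p, 0).1 (p, 0).2 :=
    (chk_computable hR).comp (Computable.id.pair (Computable.const 0))
  have hg : Computable fun p : List ℕ × List ℕ => chk R p 0 := hg0.of_eq fun p => rfl
  have H := Computable.nat_rec
    (f := fun p : List ℕ × List ℕ => p.1.length)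
    (g := fun p : List ℕ × List ℕ => chk R p 0)
    (h := fun (p : List ℕ × List ℕ) (q : ℕ × Bool) => q.2 && chk R p (q.1 + 1))
    (Computable.list_length.comp Computable.fst) hg hh.to₂
  exact H.of_eq fun p => rfl

theorem leL_primrec : Primrec leL := by
  have hgd : Primrec₂ fun (l : List ℕ) (i : ℕ) => l.getD i 0 := Primrec.list_getD 0
  have hstep : Primrec₂ fun (p : List ℕ × List ℕ) (q : ℕ × Bool) =>
      q.2 && decide (p.1.getD q.1 0 ≤ p.2.getD q.1 0) := by
    have h1 : Primrec fun x : (List ℕ × List ℕ) × ℕ × Bool => x.1.1.getD x.2.1 0 :=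
      hgd.comp (Primrec.fst.comp Primrec.fst) (Primrec.fst.comp Primrec.snd)
    have h2 : Primrec fun x : (List ℕ × List ℕ) × ℕ × Bool => x.1.2.getD x.2.1 0 :=
      hgd.comp (Primrec.snd.comp Primrec.fst) (Primrec.fst.comp Primrec.snd)
    have hle : Primrec fun x : (List ℕ × List ℕ) × ℕ × Bool =>
        decide (x.1.1.getD x.2.1 0 ≤ x.1.2.getD x.2.1 0) := (Primrec.nat_le.comp h1 h2).decide
    exact (Primrec.and.comp (Primrec.snd.comp Primrec.snd) hle).to₂
  have H := Primrec.nat_rec' (f := fun p : List ℕ × List ℕ => p.1.length)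
    (g := fun _ : List ℕ × List ℕ => true)
    (Primrec.list_length.comp Primrec.fst) (Primrec.const true) hstep
  exact H.of_eq fun p => rfl

theorem good_computable {R : List ℕ × List ℕ × ℕ → Bool} (hR : Computable R) :
    Computable (good R) := by
  have hofNat : Computable fun q : (List ℕ × List ℕ) × ℕ => Denumerable.ofNat (List ℕ) q.2 :=
    (Computable.ofNat (List ℕ)).comp Computable.snd
  have hlen1 : Computable fun q : (List ℕ × List ℕ) × ℕ =>
      (Denumerable.ofNat (List ℕ) q.2).length := Computable.list_length.comp hofNat
  have hlen2 : Computable fun q : (List ℕ × List ℕ) × ℕ => q.1.1.length :=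
    Computable.list_length.comp (Computable.fst.comp Computable.fst)
  have h1 : Computable fun q : (List ℕ × List ℕ) × ℕ =>
      decide ((Denumerable.ofNat (List ℕ) q.2).length = q.1.1.length) :=
    ((PrimrecRel.decide Primrec.eq).to_comp.comp hlen1 hlen2).of_eq fun q => rfl
  have h2 : Computable fun q : (List ℕ × List ℕ) × ℕ =>
      leL (Denumerable.ofNat (List ℕ) q.2, q.1.2) :=
    leL_primrec.to_comp.comp (hofNat.pair (Computable.snd.comp Computable.fst))
  have h3 : Computable fun q : (List ℕ × List ℕ) × ℕ =>
      diag R (q.1.1, Denumerable.ofNat (List ℕ) q.2) :=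
    (diag_computable hR).comp ((Computable.fst.comp Computable.fst).pair hofNat)
  exact band_computable.comp (band_computable.comp h1 h2) h3

theorem exWit_computable {R : List ℕ × List ℕ × ℕ → Bool} (hR : Computable R) :
    Computable (exWit R) := by
  have ha : Computable fun x : (List ℕ × List ℕ) × ℕ × Bool => x.2.2 :=
    Computable.snd.comp Computable.snd
  have hb : Computable fun x : (List ℕ × List ℕ) × ℕ × Bool => (x.1, x.2.1 + 1) :=
    Computable.fst.pair (Computable.succ.comp (Computable.fst.comp Computable.snd))
  have hc : Computable fun x : (List ℕ × List ℕ) × ℕ × Bool => good R (x.1, x.2.1 + 1) :=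
    (good_computable hR).comp hb
  have hh : Computable fun x : (List ℕ × List ℕ) × ℕ × Bool =>
      x.2.2 || good R (x.1, x.2.1 + 1) := bor_computable.comp ha hc
  have hbase : Computable fun p : List ℕ × List ℕ => good R (p, 0) :=
    (good_computable hR).comp (Computable.id.pair (Computable.const 0))
  have hf : Computable fun p : List ℕ × List ℕ => Encodable.encode p.2 :=
    Computable.encode.comp Computable.snd
  have H := Computable.nat_rec
    (f := fun p : List ℕ × List ℕ => Encodable.encode p.2)
    (g := fun p : List ℕ × List ℕ => good R (p, 0))
    (h := fun (p : List ℕ × List ℕ) (q : ℕ × Bool) => q.2 || good R (p, q.1 + 1))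
    hf hbase hh.to₂
  exact H.of_eq fun p => rfl

theorem Tcore_computable {R : List ℕ × List ℕ × ℕ → Bool} (hR : Computable R) :
    Computable fun p : List ℕ × List ℕ => Tcore R p.1 p.2 := by
  have hrev : Computable fun p : List ℕ × List ℕ => (p.1, p.2.reverse) :=
    Computable.fst.pair (Computable.list_reverse.comp Computable.snd)
  exact band_computable.comp (leL_primrec.to_comp.comp hrev)
    ((exWit_computable hR).comp hrev)

/-! ### Elementary list lemmas -/

theorem initSeg_length (X : ℕ → ℕ) (n : ℕ) : (initSeg X n).length = n := by simp [initSeg]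

theorem initSeg_getD {X : ℕ → ℕ} {n i : ℕ} (h : i < n) : (initSeg X n).getD i 0 = X i := by
  rw [List.getD_eq_getElem _ _ (by simpa [initSeg_length] using h)]
  simp [initSeg]

theorem initSeg_succ (X : ℕ → ℕ) (n : ℕ) : initSeg X (n + 1) = initSeg X n ++ [X n] := by
  rw [initSeg, List.ofFn_succ']
  simp [initSeg, List.concat_eq_append]

theorem takeD_length (l : List ℕ) (z : ℕ) : (takeD l z).length = z := by simp [takeD]

theorem takeD_getD {l : List ℕ} {z i : ℕ} (h : i < z) : (takeD l z).getD i 0 = l.getD i 0 := by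
  rw [List.getD_eq_getElem _ _ (by simpa [takeD_length] using h)]
  simp [takeD]

theorem takeD_congr {a b : List ℕ} {z : ℕ} (h : ∀ i < z, a.getD i 0 = b.getD i 0) :
    takeD a z = takeD b z := by
  unfold takeD
  apply List.map_congr_left
  intro i hi
  exact h i (List.mem_range.1 hi)

theorem takeD_initSeg {X : ℕ → ℕ} {z n : ℕ} (h : z ≤ n) :
    takeD (initSeg X n) z = initSeg X z := by
  apply List.ext_getElem (by simp [takeD_length, initSeg_length])
  intro i h1 h2
  have hiz : i < z := by simpa [takeD_length] using h1
  simp only [takeD, List.getElem_map, List.getElem_range]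
  rw [initSeg_getD (lt_of_lt_of_le hiz h)]
  simp [initSeg]

theorem getD_prefix {τ σ : List ℕ} (h : τ <+: σ) {i : ℕ} (hi : i < τ.length) :
    τ.getD i 0 = σ.getD i 0 := by
  obtain ⟨t, rfl⟩ := h
  rw [List.getD_eq_getElem _ _ hi, List.getD_eq_getElem _ _ (by simp; omega)]
  exact (List.getElem_append_left hi).symm

theorem getD_take {w : List ℕ} {m i : ℕ} (hi : i < m) (him : i < w.length) :
    (w.take m).getD i 0 = w.getD i 0 :=
  getD_prefix (List.take_prefix m w) (by simp; omega)

theorem pair_le_pair {a₁ a₂ b₁ b₂ : ℕ} (ha : a₁ ≤ a₂) (hb : b₁ ≤ b₂) :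
    Nat.pair a₁ b₁ ≤ Nat.pair a₂ b₂ := by
  have h1 : Nat.pair a₁ b₁ ≤ Nat.pair a₂ b₁ := by
    rcases lt_or_eq_of_le ha with h | h
    · exact (Nat.pair_lt_pair_left _ h).le
    · rw [h]
  have h2 : Nat.pair a₂ b₁ ≤ Nat.pair a₂ b₂ := by
    rcases lt_or_eq_of_le hb with h | h
    · exact (Nat.pair_lt_pair_right _ h).le
    · rw [h]
  exact h1.trans h2

theorem encode_list_le : ∀ {l m : List ℕ}, l.length = m.length →
    (∀ i < l.length, l.getD i 0 ≤ m.getD i 0) →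
    Encodable.encode l ≤ Encodable.encode m := by
  intro l
  induction l with
  | nil =>
      intro m h _
      cases m with
      | nil => exact le_refl _
      | cons b m => simp at h
  | cons a l ih =>
      intro m hlen hle
      cases m with
      | nil => simp at hlen
      | cons b m =>
          simp only [Encodable.encode_list_cons]
          have h0 : a ≤ b := by simpa using hle 0 (by simp)
          have htail : Encodable.encode l ≤ Encodable.encode m := by
            apply ih (by simpa using hlen)
            intro i hi
            simpa using hle (i + 1) (by simpa using Nat.succ_lt_succ hi)
          exact Nat.succ_le_succ (pair_le_pair h0 htail)

/-! ### Boolean quantifier lemmas -/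

theorem natRecAll (p : ℕ → Bool) (n : ℕ) :
    (Nat.rec true (fun i ih => ih && p i) n : Bool) = true ↔ ∀ i < n, p i = true := by
  induction n with
  | zero => simp
  | succ n ih =>
      show ((Nat.rec true (fun i ih => ih && p i) n : Bool) && p n) = true ↔ _
      rw [Bool.and_eq_true, ih]
      constructor
      · rintro ⟨h1, h2⟩ i hi
        rcases Nat.lt_succ_iff_lt_or_eq.1 hi with h | rfl
        · exact h1 i h
        · exact h2
      · intro h
        exact ⟨fun i hi => h i (hi.trans (Nat.lt_succ_self n)), h n (Nat.lt_succ_self n)⟩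

theorem natRecAll' (p : ℕ → Bool) (n : ℕ) :
    (Nat.rec (p 0) (fun z ih => ih && p (z + 1)) n : Bool) = true ↔ ∀ z ≤ n, p z = true := by
  induction n with
  | zero => simp [Nat.le_zero]
  | succ n ih =>
      show ((Nat.rec (p 0) (fun z ih => ih && p (z + 1)) n : Bool) && p (n + 1)) = true ↔ _
      rw [Bool.and_eq_true, ih]
      constructor
      · rintro ⟨h1, h2⟩ z hz
        rcases Nat.lt_succ_iff_lt_or_eq.1 (Nat.lt_succ_of_le hz) with h | rfl
        · exact h1 z (Nat.lt_succ_iff.1 h)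
        · exact h2
      · intro h
        exact ⟨fun z hz => h z (hz.trans (Nat.le_succ n)), h (n + 1) le_rfl⟩

theorem natRecEx (p : ℕ → Bool) (n : ℕ) :
    (Nat.rec (p 0) (fun k ih => ih || p (k + 1)) n : Bool) = true ↔ ∃ k ≤ n, p k = true := by
  induction n with
  | zero => simp [Nat.le_zero]
  | succ n ih =>
      show ((Nat.rec (p 0) (fun k ih => ih || p (k + 1)) n : Bool) || p (n + 1)) = true ↔ _
      rw [Bool.or_eq_true, ih]
      constructor
      · rintro (⟨k, hk, h⟩ | h)
        · exact ⟨k, hk.trans (Nat.le_succ n), h⟩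
        · exact ⟨n + 1, le_rfl, h⟩
      · rintro ⟨k, hk, h⟩
        rcases Nat.lt_succ_iff_lt_or_eq.1 (Nat.lt_succ_of_le hk) with h' | rfl
        · exact Or.inl ⟨k, Nat.lt_succ_iff.1 h', h⟩
        · exact Or.inr h

/-! ### Semantics of the tree predicate -/

theorem leL_eq_true_iff (a b : List ℕ) :
    leL (a, b) = true ↔ ∀ i < a.length, a.getD i 0 ≤ b.getD i 0 := by
  show (Nat.rec true (fun i ih => ih && decide (a.getD i 0 ≤ b.getD i 0)) a.length : Bool)
      = true ↔ _
  rw [natRecAll]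
  simp

theorem diag_eq_true_iff (R : List ℕ × List ℕ × ℕ → Bool) (σ τ : List ℕ) :
    diag R (σ, τ) = true ↔ ∀ z ≤ σ.length, R (takeD σ z, takeD τ z, z) = true := by
  show (Nat.rec (chk R (σ, τ) 0) (fun z ih => ih && chk R (σ, τ) (z + 1)) σ.length : Bool)
      = true ↔ _
  rw [natRecAll' (fun z => chk R (σ, τ) z)]
  simp only [chk]

theorem exWit_eq_true_iff (R : List ℕ × List ℕ × ℕ → Bool) (σ L : List ℕ) :
    exWit R (σ, L) = true ↔ ∃ k ≤ Encodable.encode L, good R ((σ, L), k) = true := by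
  show (Nat.rec (good R ((σ, L), 0)) (fun k ih => ih || good R ((σ, L), k + 1))
      (Encodable.encode L) : Bool) = true ↔ _
  rw [natRecEx (fun k => good R ((σ, L), k))]

theorem good_eq_true_iff (R : List ℕ × List ℕ × ℕ → Bool) (σ L : List ℕ) (k : ℕ) :
    good R ((σ, L), k) = true ↔
      (Denumerable.ofNat (List ℕ) k).length = σ.length ∧
      leL (Denumerable.ofNat (List ℕ) k, L) = true ∧
      diag R (σ, Denumerable.ofNat (List ℕ) k) = true := by
  simp [good, Bool.and_eq_true, and_assoc]

theorem Tcore_eq_true_iff (R : List ℕ × List ℕ × ℕ → Bool) (σ Lrev : List ℕ)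
    (hlen : Lrev.length = σ.length) :
    Tcore R σ Lrev = true ↔
      ((∀ i < σ.length, σ.getD i 0 ≤ Lrev.reverse.getD i 0) ∧
        ∃ τ : List ℕ, τ.length = σ.length ∧
          (∀ i < τ.length, τ.getD i 0 ≤ Lrev.reverse.getD i 0) ∧
          ∀ z ≤ σ.length, R (takeD σ z, takeD τ z, z) = true) := by
  unfold Tcore
  rw [Bool.and_eq_true, leL_eq_true_iff, exWit_eq_true_iff]
  apply and_congr Iff.rfl
  constructor
  · rintro ⟨k, _, hk⟩
    rw [good_eq_true_iff] at hk
    obtain ⟨hklen, hle, hdiag⟩ := hk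
    refine ⟨Denumerable.ofNat (List ℕ) k, hklen, ?_, (diag_eq_true_iff R σ _).1 hdiag⟩
    exact (leL_eq_true_iff _ _).1 hle
  · rintro ⟨τ, hτlen, hτle, hτR⟩
    refine ⟨Encodable.encode τ, ?_, ?_⟩
    · apply encode_list_le
      · rw [hτlen, List.length_reverse, hlen]
      · exact hτle
    · rw [good_eq_true_iff, Denumerable.ofNat_encode]
      exact ⟨hτlen, (leL_eq_true_iff _ _).2 hτle, (diag_eq_true_iff R σ τ).2 hτR⟩

theorem revInit_length (O : ℕ → ℕ) (n : ℕ) : (revInit O n).length = n := by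
  induction n with
  | zero => rfl
  | succ n ih => simp [revInit, ih]

theorem revInit_reverse (O : ℕ → ℕ) (n : ℕ) : (revInit O n).reverse = initSeg O n := by
  induction n with
  | zero => rfl
  | succ n ih => rw [revInit, List.reverse_cons, ih, initSeg_succ]

/-! ### König's lemma -/

theorem koenig (g : ℕ → ℕ) (U : List ℕ → Prop)
    (hpref : ∀ p q : List ℕ, p <+: q → U q → U p)
    (hbd : ∀ p : List ℕ, U p → ∀ i : Fin p.length, p.get i ≤ g i.val)
    (hlen : ∀ n : ℕ, ∃ p, U p ∧ p.length = n) :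
    ∃ Y : ℕ → ℕ, ∀ n, U (initSeg Y n) := by
  classical
  set Ext : List ℕ → Prop := fun p => ∀ n, ∃ q, U q ∧ p <+: q ∧ n ≤ q.length with hExt
  have hU : ∀ p, Ext p → U p := by
    rintro p hp
    obtain ⟨q, hq, hpq, -⟩ := hp 0
    exact hpref p q hpq hq
  have hnil : Ext [] := by
    intro n
    obtain ⟨p, hp, hplen⟩ := hlen n
    exact ⟨p, hp, List.nil_prefix, hplen.ge⟩
  have hstep : ∀ p, Ext p → ∃ a, Ext (p ++ [a]) := by
    intro p hp
    by_contra hcon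
    push_neg at hcon
    have hax : ∀ a, ∃ n, ∀ q, U q → (p ++ [a]) <+: q → q.length < n := by
      intro a
      have hthis : ¬ ∀ n, ∃ q, U q ∧ (p ++ [a]) <+: q ∧ n ≤ q.length := hcon a
      obtain ⟨n, hn⟩ := not_forall.mp hthis
      exact ⟨n, fun q hq hpre => lt_of_not_ge fun hh => hn ⟨q, hq, hpre, hh⟩⟩
    choose nb hnb using hax
    set N : ℕ := p.length + 1 + (Finset.range (g p.length + 1)).sup nb with hN
    obtain ⟨q, hq, hpq, hqlen⟩ := hp N
    have hlt : p.length < q.length := by omega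
    set a : ℕ := q.get ⟨p.length, hlt⟩ with ha
    have hag : a ≤ g p.length := hbd q hq ⟨p.length, hlt⟩
    have hpre : (p ++ [a]) <+: q := by
      obtain ⟨t, rfl⟩ := hpq
      have ht : t ≠ [] := by
        intro h; subst h; simp at hlt
      obtain ⟨b, t', rfl⟩ := List.exists_cons_of_ne_nil ht
      have hb : b = a := by
        rw [ha]
        simp [List.get_eq_getElem]
      rw [hb]
      exact ⟨t', by simp⟩
    have := hnb a q hq hpre
    have hle : nb a ≤ (Finset.range (g p.length + 1)).sup nb :=
      Finset.le_sup (Finset.mem_range.2 (Nat.lt_succ_of_le hag))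
    omega
  let F : (n : ℕ) → {p : List ℕ // Ext p ∧ p.length = n} := fun n =>
    Nat.rec ⟨[], hnil, rfl⟩
      (fun n ih => ⟨ih.1 ++ [Classical.choose (hstep ih.1 ih.2.1)],
        Classical.choose_spec (hstep ih.1 ih.2.1), by simp [ih.2.2]⟩) n
  have hFsucc : ∀ n, (F (n + 1)).1 = (F n).1 ++ [Classical.choose (hstep (F n).1 (F n).2.1)] :=
    fun n => rfl
  refine ⟨fun n => (F (n + 1)).1.getD n 0, ?_⟩
  have hinit : ∀ n, initSeg (fun n => (F (n + 1)).1.getD n 0) n = (F n).1 := by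
    intro n
    induction n with
    | zero =>
        have h0 : (F 0).1 = [] := rfl
        rw [h0]
        rfl
    | succ n ih =>
        rw [initSeg_succ, ih, hFsucc n]
        congr 1
        have hc : (F (n + 1)).1.getD n 0 = Classical.choose (hstep (F n).1 (F n).2.1) := by
          rw [hFsucc n, List.getD_eq_getElem _ _ (by simp [(F n).2.2])]
          rw [List.getElem_append_right (le_of_eq (F n).2.2)]
          simp [(F n).2.2]
        rw [hc]
  intro n
  rw [hinit n]
  exact hU _ (F n).2.1

/-! ### The main construction -/

theorem main_modulus (C : Set (ℕ → ℕ)) (R : List ℕ × List ℕ × ℕ → Bool)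
    (hR : Computable R)
    (hsub : {X : ℕ → ℕ | ∃ Y : ℕ → ℕ, ∀ z : ℕ, R (initSeg X z, initSeg Y z, z) = true} ⊆ C)
    (X Y : ℕ → ℕ) (hXY : ∀ z : ℕ, R (initSeg X z, initSeg Y z, z) = true) :
    IsPi01Modulus (fun x => max (X x) (Y x)) C := by
  intro g hg
  set T : List ℕ → Bool := fun σ => Tcore R σ (revInit g σ.length) with hT
  have hsem : ∀ σ : List ℕ, T σ = true ↔
      ((∀ i < σ.length, σ.getD i 0 ≤ g i) ∧
        ∃ τ : List ℕ, τ.length = σ.length ∧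
          (∀ i < τ.length, τ.getD i 0 ≤ g i) ∧
          ∀ z ≤ σ.length, R (takeD σ z, takeD τ z, z) = true) := by
    intro σ
    rw [hT]
    rw [Tcore_eq_true_iff R σ _ (revInit_length g _), revInit_reverse]
    apply and_congr
    · exact forall₂_congr fun i hi => by rw [initSeg_getD hi]
    · apply exists_congr; intro τ
      apply and_congr_right; intro hτlen
      apply and_congr_left; intro _
      refine forall₂_congr fun i hi => ?_
      rw [initSeg_getD (by omega)]
  have hXD : ∀ n, T (initSeg X n) = true := by
    intro n
    rw [hsem]
    constructor
    · intro i hi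
      have hi' : i < n := by simpa [initSeg_length] using hi
      rw [initSeg_getD hi']
      exact le_trans (le_max_left _ _) (hg i)
    · refine ⟨initSeg Y n, by simp [initSeg_length], ?_, ?_⟩
      · intro i hi
        have hi' : i < n := by simpa [initSeg_length] using hi
        rw [initSeg_getD hi']
        exact le_trans (le_max_right _ _) (hg i)
      · intro z hz
        have hz' : z ≤ n := by simpa [initSeg_length] using hz
        rw [takeD_initSeg hz', takeD_initSeg hz']
        exact hXY z
  refine ⟨{Z | ∀ n : ℕ, T (initSeg Z n) = true}, ⟨X, hXD⟩, ?_, T, ?_, ?_, ⟨g, computableIn_self g, ?_⟩, rfl⟩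
  · -- D ⊆ C
    intro Z hZ
    apply hsub
    set U : List ℕ → Prop := fun p =>
      (∀ i < p.length, p.getD i 0 ≤ g i) ∧
      ∀ z ≤ p.length, R (initSeg Z z, takeD p z, z) = true with hUdef
    have hpref : ∀ p q : List ℕ, p <+: q → U q → U p := by
      rintro p q hpq ⟨hq1, hq2⟩
      have hlen := hpq.length_le
      constructor
      · intro i hi
        rw [getD_prefix hpq hi]
        exact hq1 i (by omega)
      · intro z hz
        rw [takeD_congr fun i hi => getD_prefix hpq (by omega)]
        exact hq2 z (by omega)
    have hbd : ∀ p : List ℕ, U p → ∀ i : Fin p.length, p.get i ≤ g i.val := by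
      rintro p ⟨hp1, -⟩ i
      have := hp1 i.val i.isLt
      rwa [List.getD_eq_getElem _ _ i.isLt] at this
    have hlen : ∀ n : ℕ, ∃ p, U p ∧ p.length = n := by
      intro n
      have := (hsem (initSeg Z n)).1 (hZ n)
      obtain ⟨-, τ, hτlen, hτle, hτR⟩ := this
      have hτn : τ.length = n := by rwa [initSeg_length] at hτlen
      refine ⟨τ, ⟨hτle, ?_⟩, hτn⟩
      intro z hz
      have hz' : z ≤ n := by omega
      have := hτR z (by rwa [initSeg_length])
      rwa [takeD_initSeg hz'] at this
    obtain ⟨Y', hY'⟩ := koenig g U hpref hbd hlen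
    refine ⟨Y', fun z => ?_⟩
    have := (hY' z).2 z (by rw [initSeg_length])
    rwa [takeD_initSeg le_rfl] at this
  · -- computability
    exact computableIn_oracleForm (Tcore_computable hR)
  · -- tree property
    intro σ τp hpre hσ
    rw [hsem] at hσ ⊢
    obtain ⟨h1, w, hwlen, hwle, hwR⟩ := hσ
    have hm : τp.length ≤ σ.length := hpre.length_le
    constructor
    · intro i hi
      rw [getD_prefix hpre hi]
      exact h1 i (by omega)
    · refine ⟨w.take τp.length, ?_, ?_, ?_⟩
      · rw [List.length_take, hwlen]
        exact min_eq_left hm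
      · intro i hi
        have hi' : i < τp.length := by
          rw [List.length_take, hwlen] at hi
          omega
        rw [getD_take hi' (by omega)]
        exact hwle i (by omega)
      · intro z hz
        rw [takeD_congr fun i hi => getD_prefix hpre (by omega),
          takeD_congr fun i hi => getD_take (by omega) (by omega)]
        exact hwR z (by omega)
  · -- bound
    intro σ hσ i
    have h1 := ((hsem σ).1 hσ).1 i.val i.isLt
    rwa [List.getD_eq_getElem _ _ i.isLt] at h1

/-- If `C ⊆ ω^ω` has a non-empty `Σ¹₁` subset then `C` admits a `Π⁰₁`
modulus; more precisely, if `R` is a computable predicate with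
`{X | ∃ Y ∀ z, R (X↾z) (Y↾z) z} ⊆ C` and `X, Y` satisfy `∀ z, R (X↾z) (Y↾z) z`, then
`f x = max (X x) (Y x)` is a `Π⁰₁` modulus of `C`. -/
theorem pi01Modulus_of_sigma11_subset :
    (∀ C : Set (ℕ → ℕ),
      (∃ D : Set (ℕ → ℕ), D.Nonempty ∧ D ⊆ C ∧ IsSigma11 D) →
      ∃ f : ℕ → ℕ, IsPi01Modulus f C) ∧
    (∀ (C : Set (ℕ → ℕ)) (R : List ℕ × List ℕ × ℕ → Bool),
      Computable R →
      {X : ℕ → ℕ | ∃ Y : ℕ → ℕ, ∀ z : ℕ, R (initSeg X z, initSeg Y z, z) = true} ⊆ C →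
      ∀ X Y : ℕ → ℕ, (∀ z : ℕ, R (initSeg X z, initSeg Y z, z) = true) →
        IsPi01Modulus (fun x => max (X x) (Y x)) C) := by
  constructor
  · rintro C ⟨D, ⟨x, hx⟩, hDC, R, hR, hDdef⟩
    subst hDdef
    obtain ⟨Y, hY⟩ := hx
    exact ⟨fun n => max (x n) (Y n), main_modulus C R hR hDC x Y hY⟩
  · intro C R hR hsub X Y hXY
    exact main_modulus C R hR hsub X Y hXY

end Paper
end

section
/- There exists a binary tree T ⊆ 2^{<ω} of positive measure such that the set [T] of infinite paths of T has no non-empty Σ¹₁ subset. (For example, a tree whose paths form a non-empty Π⁰₁(𝒪) class of Martin-Löf randoms relative to Kleene's 𝒪 works, since the sets Turing reducible to Kleene's 𝒪 form a basis for the Σ¹₁ subsets of 2^ω.) -/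
namespace Paper

/-- A binary tree `T ⊆ 2^{<ω}`: a prefix-closed set of binary strings. -/
def IsBinTree (T : Set (List Bool)) : Prop :=
  ∀ σ ∈ T, ∀ τ : List Bool, τ <+: σ → τ ∈ T

/-- `T` has positive measure: `lim_s |{σ ∈ T : |σ| = s}| / 2^s > 0`. -/
def PositiveMeasure (T : Set (List Bool)) : Prop :=
  ∃ c : ℝ, 0 < c ∧
    Filter.Tendsto (fun s : ℕ => ({σ ∈ T | σ.length = s} : Set (List Bool)).ncard / (2 ^ s : ℝ))
      Filter.atTop (nhds c)

/-- The set `[T]` of infinite paths of a binary tree `T`. -/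
def binPaths (T : Set (List Bool)) : Set (ℕ → Bool) :=
  {X | ∀ n : ℕ, (List.ofFn fun i : Fin n => X i) ∈ T}

/-- `D ⊆ 2^ω` is `Σ¹₁`. -/
def IsSigma11Cantor (D : Set (ℕ → Bool)) : Prop :=
  ∃ R : List Bool × List ℕ × ℕ → Bool,
    Computable R ∧
    D = {X | ∃ Y : ℕ → ℕ, ∀ z : ℕ,
      R (List.ofFn fun i : Fin z => X i, initSeg Y z, z) = true}

/-! ### Auxiliary lemmas for the proof -/

private def levelEquivAux (s : ℕ) : {σ : List Bool // σ.length = s} ≃ List.Vector Bool s :=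
  Equiv.refl _

private lemma level_finite (s : ℕ) : {σ : List Bool | σ.length = s}.Finite := by
  haveI : Finite ({σ : List Bool | σ.length = s} : Set (List Bool)) :=
    Finite.of_equiv _ (levelEquivAux s).symm
  exact Set.toFinite _

private lemma level_ncard (s : ℕ) : ({σ : List Bool | σ.length = s}).ncard = 2 ^ s := by
  rw [← Nat.card_coe_set_eq]
  have h : Nat.card ({σ : List Bool | σ.length = s} : Set (List Bool))
      = Nat.card (List.Vector Bool s) := Nat.card_congr (levelEquivAux s)
  rw [h, Nat.card_eq_fintype_card, card_vector, Fintype.card_bool]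

private lemma cyl_ncard (ρ : List Bool) (s : ℕ) (h : ρ.length ≤ s) :
    ({σ : List Bool | σ.length = s ∧ ρ <+: σ}).ncard = 2 ^ (s - ρ.length) := by
  have heq : {σ : List Bool | σ.length = s ∧ ρ <+: σ}
      = (fun τ => ρ ++ τ) '' {τ : List Bool | τ.length = s - ρ.length} := by
    ext σ
    constructor
    · rintro ⟨hl, t, rfl⟩
      refine ⟨t, ?_, rfl⟩
      simp only [Set.mem_setOf_eq]
      simp at hl; omega
    · rintro ⟨t, ht, rfl⟩
      simp only [Set.mem_setOf_eq] at ht ⊢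
      exact ⟨by simp; omega, t, rfl⟩
  rw [heq, Set.ncard_image_of_injective _ (fun a b => by simp), level_ncard]

private lemma ncard_biUnion_le {α : Type} (r : Finset ℕ) (f : ℕ → Set α) :
    (⋃ n ∈ r, f n).ncard ≤ ∑ n ∈ r, (f n).ncard := by
  classical
  induction r using Finset.induction with
  | empty => simp
  | insert _ _ h ih =>
    rw [Finset.set_biUnion_insert, Finset.sum_insert h]
    exact le_trans (Set.ncard_union_le _ _) (Nat.add_le_add le_rfl ih)

private lemma sum_two_pow (m : ℕ) : ∑ n ∈ Finset.range m, 2 ^ n = 2 ^ m - 1 := by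
  induction m with
  | zero => simp
  | succ m ih =>
    have h1 : (1 : ℕ) ≤ 2 ^ m := Nat.one_le_two_pow
    rw [Finset.sum_range_succ, ih, pow_succ]
    omega

private lemma computable_countable {α β : Type} [Primcodable α] [Primcodable β] :
    {f : α → β | Computable f}.Countable := by
  have hpc : {g : ℕ →. ℕ | Nat.Partrec g}.Countable := by
    have hsub : {g : ℕ →. ℕ | Nat.Partrec g} ⊆ Set.range Nat.Partrec.Code.eval := by
      intro g hg
      rcases Nat.Partrec.Code.exists_code.mp hg with ⟨c, hc⟩
      exact ⟨c, hc⟩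
    exact (Set.countable_range _).mono hsub
  have hinj : Function.Injective (fun (f : α → β) (n : ℕ) =>
      Part.bind (Encodable.decode (α := α) n) fun a =>
        Part.some (Encodable.encode (f a))) := by
    intro f g hfg
    funext a
    have h := congrFun hfg (Encodable.encode a)
    simp [Encodable.encodek] at h
    exact h
  have hsub : {f : α → β | Computable f} ⊆
      (fun (f : α → β) (n : ℕ) =>
        Part.bind (Encodable.decode (α := α) n) fun a =>
          Part.some (Encodable.encode (f a))) ⁻¹' {g | Nat.Partrec g} := by
    intro f hf
    have h : Nat.Partrec fun n =>
        Part.bind (Encodable.decode (α := α) n) fun a =>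
          Part.map Encodable.encode (f a : Part β) := hf
    exact h.of_eq (by intro n; simp)
  exact (hpc.preimage hinj).mono hsub

/-- The tree of binary strings avoiding every forbidden prefix `ρ n`. -/
private def forbTree (ρ : ℕ → List Bool) : Set (List Bool) := {σ | ∀ n, ¬ ρ n <+: σ}

private lemma forbTree_posMeasure (ρ : ℕ → List Bool) (hlen : ∀ n, (ρ n).length = n + 2) :
    ∃ c : ℝ, 0 < c ∧
      Filter.Tendsto (fun s : ℕ =>
        ({σ ∈ forbTree ρ | σ.length = s} : Set (List Bool)).ncard / (2 ^ s : ℝ))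
        Filter.atTop (nhds c) := by
  classical
  set T := forbTree ρ with hT
  have hgood_sub : ∀ s, {σ ∈ T | σ.length = s} ⊆ {σ : List Bool | σ.length = s} :=
    fun s σ h => h.2
  have hfin : ∀ s, ({σ ∈ T | σ.length = s} : Set (List Bool)).Finite :=
    fun s => (level_finite s).subset (hgood_sub s)
  -- lower bound
  have hlow : ∀ s, 2 ^ s ≤ 2 * ({σ ∈ T | σ.length = s} : Set (List Bool)).ncard := by
    intro s
    rcases Nat.eq_zero_or_pos s with rfl | hs
    · have h0 : ([] : List Bool) ∈ {σ ∈ T | σ.length = 0} := by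
        refine ⟨fun n hn => ?_, rfl⟩
        have := hn.length_le
        rw [hlen] at this
        simp at this
      have h1 : 0 < ({σ ∈ T | σ.length = 0} : Set (List Bool)).ncard :=
        (Set.ncard_pos (hfin 0)).mpr ⟨_, h0⟩
      have : 2^0 = 1 := rfl
      omega
    · set bad : Set (List Bool) := {σ | σ.length = s ∧ ∃ n, ρ n <+: σ} with hbaddef
      have hbadsub : bad ⊆ ⋃ n ∈ Finset.range (s - 1),
          {σ : List Bool | σ.length = s ∧ ρ n <+: σ} := by
        rintro σ ⟨hl, n, hp⟩
        have hle := hp.length_le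
        rw [hlen, hl] at hle
        exact Set.mem_iUnion₂.mpr ⟨n, Finset.mem_range.mpr (by omega), ⟨hl, hp⟩⟩
      have hcylfin : ∀ n, ({σ : List Bool | σ.length = s ∧ ρ n <+: σ}).Finite :=
        fun n => (level_finite s).subset (fun σ h => h.1)
      have hufin : (⋃ n ∈ Finset.range (s - 1),
          {σ : List Bool | σ.length = s ∧ ρ n <+: σ}).Finite :=
        Set.Finite.biUnion (Finset.range (s - 1)).finite_toSet (fun n _ => hcylfin n)
      have hbadcard : bad.ncard ≤ 2 ^ (s - 1) - 1 := by
        calc bad.ncard ≤ (⋃ n ∈ Finset.range (s - 1),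
              {σ : List Bool | σ.length = s ∧ ρ n <+: σ}).ncard :=
            Set.ncard_le_ncard hbadsub hufin
          _ ≤ ∑ n ∈ Finset.range (s - 1),
              ({σ : List Bool | σ.length = s ∧ ρ n <+: σ}).ncard :=
            ncard_biUnion_le _ _
          _ = ∑ n ∈ Finset.range (s - 1), 2 ^ ((s - 1) - 1 - n) := by
            refine Finset.sum_congr rfl (fun n hn => ?_)
            rw [Finset.mem_range] at hn
            rw [cyl_ncard _ _ (by rw [hlen]; omega), hlen]
            congr 1
            omega
          _ = ∑ n ∈ Finset.range (s - 1), 2 ^ n := Finset.sum_range_reflect _ _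
          _ = 2 ^ (s - 1) - 1 := sum_two_pow _
      have hdiffsub : {σ : List Bool | σ.length = s} \ bad ⊆ {σ ∈ T | σ.length = s} := by
        rintro σ ⟨hl, hnb⟩
        exact ⟨fun n hp => hnb ⟨hl, n, hp⟩, hl⟩
      have hbadsub' : bad ⊆ {σ : List Bool | σ.length = s} := fun σ h => h.1
      have hbadfin : bad.Finite := (level_finite s).subset hbadsub'
      have hdiff : ({σ : List Bool | σ.length = s} \ bad).ncard = 2 ^ s - bad.ncard := by
        rw [Set.ncard_diff hbadsub' hbadfin, level_ncard]
      have hge : 2 ^ s - (2 ^ (s - 1) - 1) ≤ ({σ ∈ T | σ.length = s} : Set (List Bool)).ncard := by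
        have := Set.ncard_le_ncard hdiffsub (hfin s)
        rw [hdiff] at this
        omega
      have h2 : 2 ^ s = 2 * 2 ^ (s - 1) := by
        rw [← pow_succ']
        congr 1
        omega
      have h3 : (1 : ℕ) ≤ 2 ^ (s - 1) := Nat.one_le_two_pow
      omega
  -- one-step bound
  have hstep : ∀ s, ({σ ∈ T | σ.length = s + 1} : Set (List Bool)).ncard
      ≤ 2 * ({σ ∈ T | σ.length = s} : Set (List Bool)).ncard := by
    intro s
    have hsub2 : {σ ∈ T | σ.length = s + 1} ⊆
        ((· ++ [false]) '' {σ ∈ T | σ.length = s}) ∪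
        ((· ++ [true]) '' {σ ∈ T | σ.length = s}) := by
      rintro σ ⟨hσT, hl⟩
      have hne : σ ≠ [] := by intro h; rw [h] at hl; simp at hl
      have hd : σ.dropLast ∈ T := fun n hp => hσT n (hp.trans (List.dropLast_prefix σ))
      have hdl : σ.dropLast.length = s := by rw [List.length_dropLast, hl]; omega
      have hrec := List.dropLast_append_getLast hne
      cases hgl : σ.getLast hne with
      | false =>
        left
        exact ⟨σ.dropLast, ⟨hd, hdl⟩, by rw [← hgl]; exact hrec⟩
      | true =>
        right
        exact ⟨σ.dropLast, ⟨hd, hdl⟩, by rw [← hgl]; exact hrec⟩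
    calc ({σ ∈ T | σ.length = s + 1} : Set (List Bool)).ncard
        ≤ (((· ++ [false]) '' {σ ∈ T | σ.length = s}) ∪
          ((· ++ [true]) '' {σ ∈ T | σ.length = s})).ncard := by
          refine Set.ncard_le_ncard hsub2 ?_
          exact Set.Finite.union ((hfin s).image _) ((hfin s).image _)
      _ ≤ ((· ++ [false]) '' {σ ∈ T | σ.length = s}).ncard +
          ((· ++ [true]) '' {σ ∈ T | σ.length = s}).ncard := Set.ncard_union_le _ _
      _ ≤ ({σ ∈ T | σ.length = s} : Set (List Bool)).ncard +
          ({σ ∈ T | σ.length = s} : Set (List Bool)).ncard :=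
          Nat.add_le_add (Set.ncard_image_le (hfin s)) (Set.ncard_image_le (hfin s))
      _ = 2 * ({σ ∈ T | σ.length = s} : Set (List Bool)).ncard := by ring
  set a : ℕ → ℝ := fun s =>
    (({σ ∈ T | σ.length = s} : Set (List Bool)).ncard : ℝ) / (2 ^ s : ℝ) with ha
  have hanti : Antitone a := by
    refine antitone_nat_of_succ_le (fun s => ?_)
    rw [ha]
    dsimp only
    rw [div_le_div_iff₀ (by positivity) (by positivity)]
    have hc : (({σ ∈ T | σ.length = s + 1} : Set (List Bool)).ncard : ℝ)
        ≤ 2 * (({σ ∈ T | σ.length = s} : Set (List Bool)).ncard : ℝ) := by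
      exact_mod_cast hstep s
    calc (({σ ∈ T | σ.length = s + 1} : Set (List Bool)).ncard : ℝ) * 2 ^ s
        ≤ (2 * (({σ ∈ T | σ.length = s} : Set (List Bool)).ncard : ℝ)) * 2 ^ s := by
          exact mul_le_mul_of_nonneg_right hc (by positivity)
      _ = (({σ ∈ T | σ.length = s} : Set (List Bool)).ncard : ℝ) * 2 ^ (s + 1) := by ring
  have hbdd : BddBelow (Set.range a) := by
    refine ⟨0, ?_⟩
    rintro _ ⟨s, rfl⟩
    rw [ha]
    positivity
  have hhalf : ∀ s, (1 : ℝ) / 2 ≤ a s := by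
    intro s
    rw [ha]
    dsimp only
    rw [div_le_div_iff₀ (by norm_num) (by positivity)]
    have hc : (2 : ℝ) ^ s ≤ 2 * (({σ ∈ T | σ.length = s} : Set (List Bool)).ncard : ℝ) := by
      exact_mod_cast hlow s
    calc (1 : ℝ) * 2 ^ s = 2 ^ s := by ring
      _ ≤ 2 * (({σ ∈ T | σ.length = s} : Set (List Bool)).ncard : ℝ) := hc
      _ = (({σ ∈ T | σ.length = s} : Set (List Bool)).ncard : ℝ) * 2 := by ring
  refine ⟨⨅ s, a s, lt_of_lt_of_le (by norm_num) (le_ciInf hhalf), ?_⟩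
  exact tendsto_atTop_ciInf hanti hbdd

/-- There exists a binary tree `T ⊆ 2^{<ω}` of positive measure such
that `[T]` has no non-empty `Σ¹₁` subset. -/
theorem exists_posMeasure_tree_no_sigma11_subset :
    ∃ T : Set (List Bool), IsBinTree T ∧ PositiveMeasure T ∧
      ¬∃ D : Set (ℕ → Bool), D.Nonempty ∧ D ⊆ binPaths T ∧ IsSigma11Cantor D := by
  classical
  set S : Set (Set (ℕ → Bool)) := {D | D.Nonempty ∧ IsSigma11Cantor D} with hS
  have hSc : S.Countable := by
    have hsub : S ⊆ (fun R : List Bool × List ℕ × ℕ → Bool =>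
        {X : ℕ → Bool | ∃ Y : ℕ → ℕ, ∀ z : ℕ,
          R (List.ofFn fun i : Fin z => X i, initSeg Y z, z) = true}) ''
        {R | Computable R} := by
      rintro D ⟨-, R, hR, rfl⟩
      exact ⟨R, hR, rfl⟩
    exact (computable_countable.image _).mono hsub
  by_cases hSne : S.Nonempty
  · obtain ⟨e, he⟩ := hSc.exists_eq_range hSne
    have hmem : ∀ n, e n ∈ S := fun n => he ▸ Set.mem_range_self n
    have hnon : ∀ n, (e n).Nonempty := fun n => (hmem n).1
    choose x hx using hnon
    set ρ : ℕ → List Bool := fun n => List.ofFn fun i : Fin (n + 2) => x n i with hρ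
    have hlen : ∀ n, (ρ n).length = n + 2 := fun n => by simp [hρ]
    refine ⟨forbTree ρ, fun σ hσ τ hτ n hn => hσ n (hn.trans hτ),
      forbTree_posMeasure ρ hlen, ?_⟩
    rintro ⟨D, hDne, hDsub, hDs⟩
    have hDS : D ∈ S := ⟨hDne, hDs⟩
    rw [he] at hDS
    obtain ⟨k, hk⟩ := hDS
    have hxk : x k ∈ binPaths (forbTree ρ) := hDsub (hk ▸ hx k)
    exact (hxk (k + 2)) k (List.prefix_refl _)
  · refine ⟨Set.univ, fun _ _ _ _ => trivial, ?_, ?_⟩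
    · refine ⟨1, one_pos, ?_⟩
      have hone : ∀ s : ℕ,
          (({σ ∈ (Set.univ : Set (List Bool)) | σ.length = s} : Set (List Bool)).ncard : ℝ)
            / (2 ^ s : ℝ) = 1 := by
        intro s
        have huniv : {σ ∈ (Set.univ : Set (List Bool)) | σ.length = s}
            = {σ : List Bool | σ.length = s} := by
          ext σ; simp
        rw [huniv, level_ncard]
        push_cast
        exact div_self (by positivity : (0 : ℝ) < 2 ^ s).ne'
      have hfun : (fun s : ℕ =>
          (({σ ∈ (Set.univ : Set (List Bool)) | σ.length = s} : Set (List Bool)).ncard : ℝ)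
            / (2 ^ s : ℝ)) = fun _ => (1 : ℝ) := funext hone
      rw [hfun]
      exact tendsto_const_nhds
    · rintro ⟨D, hDne, -, hDs⟩
      exact hSne ⟨D, hDne, hDs⟩


end Paper
end

section
/- Let k ≥ 1 and let f : [ω]² → k be a stable coloring, i.e., lim_s f(x, s) exists for every x. Define g : [ω]² → 2 by g(x, y) = 1 if f(x, y) = lim_s f(y, s) (for x < y), and g(x, y) = 0 otherwise. Then every infinite g-homogeneous set H is g-homogeneous for color 1 and is f-homogeneous. (Hence srt²_{<∞} is strongly omnisciently computably reducible to rt²₂.) -/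
namespace Paper

/-- Let `f : [ω]² → k` be a stable coloring with limit colors `L`,
and let `g : [ω]² → 2` be defined by `g(x,y) = 1` iff `f(x,y) = lim_s f(y,s)` (for
`x < y`). Then every infinite `g`-homogeneous set `H` is `g`-homogeneous for color `1`
and is `f`-homogeneous. -/
theorem stable_reduction_homogeneous
    (k : ℕ) (hk : 1 ≤ k) (f : ℕ → ℕ → Fin k)
    (L : ℕ → Fin k) (hL : ∀ x : ℕ, ∀ᶠ s in Filter.atTop, f x s = L x)
    (g : ℕ → ℕ → Fin 2)
    (hg : ∀ x y : ℕ, x < y → (g x y = 1 ↔ f x y = L y))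
    (H : Set ℕ) (hH : H.Infinite)
    (hom : ∃ c : Fin 2, ∀ x ∈ H, ∀ y ∈ H, x < y → g x y = c) :
    (∀ x ∈ H, ∀ y ∈ H, x < y → g x y = 1) ∧
      ∃ c : Fin k, ∀ x ∈ H, ∀ y ∈ H, x < y → f x y = c := by
  classical
  obtain ⟨c, hc⟩ := hom
  -- pigeonhole: some limit color d is attained infinitely often on H
  have pigeon : ∃ d : Fin k, {y ∈ H | L y = d}.Infinite := by
    by_contra h
    push_neg at h
    have : H.Finite := by
      have : H ⊆ ⋃ d : Fin k, {y ∈ H | L y = d} := by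
        intro y hy; exact Set.mem_iUnion.2 ⟨L y, hy, rfl⟩
      exact Set.Finite.subset (Set.finite_iUnion h) this
    exact hH this
  obtain ⟨d, hd⟩ := pigeon
  -- the homogeneous color is 1
  have hc1 : c = 1 := by
    by_contra hne
    obtain ⟨x, hx⟩ := hd.nonempty
    obtain ⟨N, hN⟩ := Filter.eventually_atTop.1 (hL x)
    obtain ⟨y, hy, hxy⟩ := hd.exists_gt (max x N)
    have hxly : x < y := lt_of_le_of_lt (le_max_left _ _) hxy
    have hfy : f x y = L y := by
      rw [hN y (le_of_lt (lt_of_le_of_lt (le_max_right _ _) hxy)), hx.2, hy.2]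
    have : g x y = 1 := (hg x y hxly).2 hfy
    have hcg := hc x hx.1 y hy.1 hxly
    rw [this] at hcg
    exact hne hcg.symm
  subst hc1
  refine ⟨hc, ?_⟩
  -- L is constant on H
  have hconst : ∀ y ∈ H, ∀ y' ∈ H, L y = L y' := by
    intro y hy y' hy'
    obtain ⟨N, hN⟩ := Filter.eventually_atTop.1 (hL y)
    obtain ⟨N', hN'⟩ := Filter.eventually_atTop.1 (hL y')
    obtain ⟨z, hz, hzlt⟩ := hH.exists_gt (max (max y y') (max N N'))
    have hyz : y < z := lt_of_le_of_lt (le_trans (le_max_left _ _) (le_max_left _ _)) hzlt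
    have hy'z : y' < z := lt_of_le_of_lt (le_trans (le_max_right _ _) (le_max_left _ _)) hzlt
    have h1 : L y = L z := by
      have := (hg y z hyz).1 (hc y hy z hz hyz)
      rw [hN z (le_of_lt (lt_of_le_of_lt (le_trans (le_max_left _ _) (le_max_right _ _)) hzlt))] at this
      exact this
    have h2 : L y' = L z := by
      have := (hg y' z hy'z).1 (hc y' hy' z hz hy'z)
      rw [hN' z (le_of_lt (lt_of_le_of_lt (le_trans (le_max_right _ _) (le_max_right _ _)) hzlt))] at this
      exact this
    rw [h1, h2]
  obtain ⟨y0, hy0⟩ := hH.nonempty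
  refine ⟨L y0, fun x hx y hy hxy => ?_⟩
  rw [(hg x y hxy).1 (hc x hx y hy hxy), hconst y hy y0 hy0]

end Paper
end
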